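/- With G and G̃ as above (θ_{i,j,k} = 0 for i+j < n, G(α(1-β),αβ) = α^n G̃(α,β)), the boundary value of the blown-up surface at α = 0 is the Bernstein curve of degree n on the top coefficients: G̃(0,β) = Σ_{i+j=n} θ_{i,j,m-n} · (m!/(i!j!(m-n)!)) · β^j (1-β)^i. -/

import Mathlib

theorem blowup_boundary_curve {V : Type*} [AddCommGroup V] [Module ℝ V]
    [TopologicalSpace V] [IsTopologicalAddGroup V] [ContinuousSMul ℝ V] [T2Space V]
    (m n : ℕ) (hnm : n ≤ m) (θ : ℕ → ℕ → ℕ → V)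
    (hθ : ∀ i j k : ℕ, i + j + k = m → i + j < n → θ i j k = 0)
    (G : ℝ → ℝ → V)
    (hG : ∀ u v : ℝ, G u v =
      ∑ i ∈ Finset.range (m + 1), ∑ j ∈ Finset.range (m + 1 - i),
        ((m.factorial : ℝ) / ((i.factorial : ℝ) * (j.factorial : ℝ) *
            ((m - i - j).factorial : ℝ)) * u ^ i * v ^ j * (1 - u - v) ^ (m - i - j)) •
          θ i j (m - i - j))
    (Gt : ℝ → ℝ → V)
    (hGt : ∀ α β : ℝ, G (α * (1 - β)) (α * β) = α ^ n • Gt α β)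
    (hcont : ∀ β : ℝ, ContinuousAt (fun α => Gt α β) 0) :
    ∀ β : ℝ, Gt 0 β =
      ∑ i ∈ Finset.range (n + 1),
        ((m.factorial : ℝ) / ((i.factorial : ℝ) * ((n - i).factorial : ℝ) *
            ((m - n).factorial : ℝ)) * β ^ (n - i) * (1 - β) ^ i) •
          θ i (n - i) (m - n) := by
  intro β
  set c : ℝ → ℕ → ℕ → ℝ := fun α i j =>
    (m.factorial : ℝ) / ((i.factorial : ℝ) * (j.factorial : ℝ) *
        ((m - i - j).factorial : ℝ)) *
      α ^ (i + j - n) * (1 - β) ^ i * β ^ j * (1 - α) ^ (m - i - j) with hc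
  set H : ℝ → V := fun α => ∑ i ∈ Finset.range (m + 1), ∑ j ∈ Finset.range (m + 1 - i),
    c α i j • θ i j (m - i - j) with hH
  have hGH : ∀ α : ℝ, G (α * (1 - β)) (α * β) = α ^ n • H α := by
    intro α
    rw [hG, hH]
    simp only [Finset.smul_sum]
    refine Finset.sum_congr rfl fun i hi => Finset.sum_congr rfl fun j hj => ?_
    simp only [Finset.mem_range] at hi hj
    by_cases hij : i + j < n
    · rw [hθ i j (m - i - j) (by omega) hij]
      simp
    · rw [smul_smul]
      congr 1
      have hpow : α ^ n * α ^ (i + j - n) = α ^ i * α ^ j := by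
        rw [← pow_add, ← pow_add]
        congr 1
        omega
      have h1 : (1 : ℝ) - α * (1 - β) - α * β = 1 - α := by ring
      rw [h1, hc, mul_pow, mul_pow]
      set Cf := (m.factorial : ℝ) / ((i.factorial : ℝ) * (j.factorial : ℝ) *
        ((m - i - j).factorial : ℝ))
      linear_combination -(Cf * ((1 - β) ^ i * β ^ j * (1 - α) ^ (m - i - j))) * hpow
  have hHGt : ∀ α : ℝ, α ≠ 0 → Gt α β = H α := by
    intro α hα
    have := (hGt α β).symm.trans (hGH α)
    exact smul_right_injective V (pow_ne_zero n hα) this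
  have hcontH : Continuous H := by
    rw [hH]
    refine continuous_finset_sum _ fun i _ => continuous_finset_sum _ fun j _ => ?_
    exact (by fun_prop : Continuous fun α => c α i j).smul continuous_const
  have h1 : Filter.Tendsto (fun α => Gt α β) (nhdsWithin 0 {(0:ℝ)}ᶜ) (nhds (Gt 0 β)) :=
    (hcont β).tendsto.mono_left nhdsWithin_le_nhds
  have h2 : Filter.Tendsto H (nhdsWithin 0 {(0:ℝ)}ᶜ) (nhds (H 0)) :=
    (hcontH.tendsto 0).mono_left nhdsWithin_le_nhds
  have heq : (fun α => Gt α β) =ᶠ[nhdsWithin 0 {(0:ℝ)}ᶜ] H :=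
    eventually_mem_nhdsWithin.mono fun α hα => hHGt α hα
  have h3 : Filter.Tendsto (fun α => Gt α β) (nhdsWithin 0 {(0:ℝ)}ᶜ) (nhds (H 0)) :=
    h2.congr' heq.symm
  have hkey : Gt 0 β = H 0 := tendsto_nhds_unique h1 h3
  rw [hkey]
  simp only [hH]
  have hsub : Finset.range (n + 1) ⊆ Finset.range (m + 1) := by
    apply Finset.range_subset_range.2; omega
  rw [← Finset.sum_subset hsub]
  · refine Finset.sum_congr rfl fun i hi => ?_
    simp only [Finset.mem_range] at hi
    rw [Finset.sum_eq_single_of_mem (n - i) (by simp only [Finset.mem_range]; omega)]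
    · have h4 : m - i - (n - i) = m - n := by omega
      have h5 : i + (n - i) - n = 0 := by omega
      simp only [hc, h4, h5, pow_zero, one_pow]
      congr 1
      ring
    · intro j hj hjne
      simp only [Finset.mem_range] at hj
      by_cases hij : i + j < n
      · rw [hθ i j (m - i - j) (by omega) hij, smul_zero]
      · have : i + j - n ≠ 0 := by omega
        rw [hc]
        simp only [zero_pow this, mul_zero, zero_mul, zero_smul]
  · intro i hi hi'
    simp only [Finset.mem_range] at hi hi'
    refine Finset.sum_eq_zero fun j _ => ?_
    have : i + j - n ≠ 0 := by omega
    rw [hc]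
    simp only [zero_pow this, mul_zero, zero_mul, zero_smul]
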